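/- In any n-player resource allocation model with nonnegative cost functions, every strategy vector P satisfies C(P) ≤ n · Φ(P), where C(P) = Σ_{r ∈ R} C^r(P^r) is the social cost and Φ(P) = Σ_{r ∈ R} Σ_{∅ ≠ T ⊆ P^r} ((|P^r| − |T|)! (|T| − 1)! / |P^r|!) · C^r(T) is the Shapley potential. -/

import Mathlib

open Finset

def preSet {N : Type*} [DecidableEq N] (S : Finset N)
    (π : {x // x ∈ S} ≃ Fin S.card) (i : {x // x ∈ S}) : Finset N :=
  (S.attach.filter (fun j => π j < π i)).image Subtype.val

noncomputable def shapley {N : Type*} [DecidableEq N]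
    (C : Finset N → ℝ) (S : Finset N) (i : N) : ℝ :=
  if hi : i ∈ S then
    (1 / (Nat.factorial S.card : ℝ)) *
      ∑ π : {x // x ∈ S} ≃ Fin S.card,
        (C (preSet S π ⟨i, hi⟩ ∪ {i}) - C (preSet S π ⟨i, hi⟩))
  else 0

/-- `users P r = P^r = {i : r ∈ P_i}`, the set of players using resource `r`. -/
def users {n : ℕ} {R : Type*} [DecidableEq R]
    (P : Fin n → Finset R) (r : R) : Finset (Fin n) :=
  Finset.univ.filter (fun i => r ∈ P i)

/-- The private cost of player `i` under Shapley cost sharing: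
`C_i(P) = Σ_{r ∈ P_i} φ_i(C^r, P^r)`. -/
noncomputable def privCost {n : ℕ} {R : Type*} [DecidableEq R]
    (Cr : R → Finset (Fin n) → ℝ) (P : Fin n → Finset R) (i : Fin n) : ℝ :=
  ∑ r ∈ P i, shapley (Cr r) (users P r) i

/-- The social cost `C(P) = Σ_{r ∈ R} C^r(P^r)`. -/
noncomputable def socCost {n : ℕ} {R : Type*} [Fintype R] [DecidableEq R]
    (Cr : R → Finset (Fin n) → ℝ) (P : Fin n → Finset R) : ℝ :=
  ∑ r : R, Cr r (users P r)

/-- The Shapley potential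
`Φ(P) = Σ_{r ∈ R} Σ_{∅ ≠ T ⊆ P^r} ((|P^r|-|T|)!(|T|-1)!/|P^r|!) · C^r(T)`. -/
noncomputable def pot {n : ℕ} {R : Type*} [Fintype R] [DecidableEq R]
    (Cr : R → Finset (Fin n) → ℝ) (P : Fin n → Finset R) : ℝ :=
  ∑ r : R, ∑ T ∈ (users P r).powerset.filter (fun T => T.Nonempty),
    ((Nat.factorial ((users P r).card - T.card) : ℝ) *
        (Nat.factorial (T.card - 1) : ℝ) / (Nat.factorial (users P r).card : ℝ)) *
      Cr r T

/-- `P` is a pure Nash equilibrium of the Shapley cost sharing game. -/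
def isPNE {n : ℕ} {R : Type*} [DecidableEq R]
    (Strat : Fin n → Set (Finset R)) (Cr : R → Finset (Fin n) → ℝ)
    (P : Fin n → Finset R) : Prop :=
  (∀ i, P i ∈ Strat i) ∧
    ∀ i, ∀ Q ∈ Strat i, privCost Cr P i ≤ privCost Cr (Function.update P i Q) i

/-- `H_k`, the `k`-th harmonicNum number. -/
noncomputable def harmonicNum (k : ℕ) : ℝ := ∑ l ∈ Finset.Icc 1 k, (1 / (l : ℝ))

/-- The social cost is at most `n` times the Shapley potential. -/
theorem socCost_le_card_mul_pot {n : ℕ} {R : Type*} [Fintype R] [DecidableEq R]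
    (Strat : Fin n → Set (Finset R)) (Cr : R → Finset (Fin n) → ℝ)
    (hC0 : ∀ r, Cr r ∅ = 0)
    (hnn : ∀ r T, 0 ≤ Cr r T)
    (P : Fin n → Finset R) (hP : ∀ i, P i ∈ Strat i) :
    socCost Cr P ≤ (n : ℝ) * pot Cr P := by
  unfold socCost pot
  rw [Finset.mul_sum]
  refine Finset.sum_le_sum fun r _ => ?_
  set S := users P r with hS
  rcases eq_or_ne S ∅ with h | h
  · simp [h, hC0 r, Finset.filter_singleton]
  · have hne : S.Nonempty := Finset.nonempty_iff_ne_empty.2 h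
    have hcardpos : 0 < S.card := Finset.card_pos.2 hne
    have hcardle : S.card ≤ n := by
      simpa using Finset.card_le_card (Finset.subset_univ S)
    have hmem : S ∈ S.powerset.filter (fun T => T.Nonempty) := by
      simp [Finset.mem_filter, hne]
    have hterm : ∀ T ∈ S.powerset.filter (fun T => T.Nonempty),
        0 ≤ ((Nat.factorial (S.card - T.card) : ℝ) *
            (Nat.factorial (T.card - 1) : ℝ) / (Nat.factorial S.card : ℝ)) * Cr r T := by
      intro T _
      apply mul_nonneg
      · positivity
      · exact hnn r T
    have hsum := Finset.single_le_sum hterm hmem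
    have h2 := mul_le_mul_of_nonneg_left hsum (by positivity : (0:ℝ) ≤ (n:ℝ))
    refine le_trans ?_ h2
    have hfac : (Nat.factorial S.card : ℝ) = S.card * Nat.factorial (S.card - 1) := by
      exact_mod_cast (Nat.mul_factorial_pred hcardpos.ne').symm
    have hcoef : ((Nat.factorial (S.card - S.card) : ℝ) *
        (Nat.factorial (S.card - 1) : ℝ) / (Nat.factorial S.card : ℝ)) = 1 / S.card := by
      rw [Nat.sub_self, Nat.factorial_zero, hfac]
      field_simp
      ring
    rw [hcoef]
    have hScard : (1 : ℝ) ≤ (n : ℝ) * (1 / S.card) := by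
      rw [mul_one_div, le_div_iff₀ (by exact_mod_cast hcardpos)]
      simpa using (show (S.card : ℝ) ≤ n by exact_mod_cast hcardle)
    calc Cr r S = 1 * Cr r S := (one_mul _).symm
      _ ≤ ((n : ℝ) * (1 / S.card)) * Cr r S :=
          mul_le_mul_of_nonneg_right hScard (hnn r S)
      _ = (n : ℝ) * (1 / S.card * Cr r S) := by ring
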